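/- (Tweedie's formula for the variance-preserving diffusion.) Let X₀ have density p_X on ℝ^n with finite first moment, fix ᾱ ∈ (0,1), and let X_t = √ᾱ·X₀ + √(1−ᾱ)·ε with ε ~ N(0, I) independent of X₀; denote by p_t the density of X_t. Then for every x with p_t(x) > 0, the conditional mean satisfies E[X₀ | X_t = x] = (x + (1−ᾱ)·∇_x log p_t(x)) / √ᾱ. -/

import Mathlib

open MeasureTheory Set Real

noncomputable def gaussPdf {n : ℕ} (m : EuclideanSpace ℝ (Fin n)) (v : ℝ)
    (x : EuclideanSpace ℝ (Fin n)) : ℝ :=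
  (2 * π * v) ^ (-(n : ℝ) / 2) * Real.exp (-‖x - m‖ ^ 2 / (2 * v))

lemma gauss_nonneg {n : ℕ} (m : EuclideanSpace ℝ (Fin n)) {v : ℝ} (hv : 0 < v)
    (x : EuclideanSpace ℝ (Fin n)) : 0 ≤ gaussPdf m v x := by
  have : (0:ℝ) < 2 * π * v := by positivity
  unfold gaussPdf
  positivity

lemma gauss_le {n : ℕ} (m : EuclideanSpace ℝ (Fin n)) {v : ℝ} (hv : 0 < v)
    (x : EuclideanSpace ℝ (Fin n)) : gaussPdf m v x ≤ (2 * π * v) ^ (-(n : ℝ) / 2) := by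
  have h2 : (0:ℝ) < 2 * π * v := by positivity
  have : Real.exp (-‖x - m‖ ^ 2 / (2 * v)) ≤ 1 := by
    apply Real.exp_le_one_iff.mpr
    have : (0:ℝ) ≤ ‖x - m‖ ^ 2 := by positivity
    rw [neg_div]
    simp only [Left.neg_nonpos_iff]
    positivity
  calc gaussPdf m v x ≤ (2 * π * v) ^ (-(n : ℝ) / 2) * 1 := by
        unfold gaussPdf
        apply mul_le_mul_of_nonneg_left this (le_of_lt (Real.rpow_pos_of_pos h2 _))
    _ = _ := mul_one _

lemma gauss_continuous {n : ℕ} {v : ℝ} (a : ℝ) (y : EuclideanSpace ℝ (Fin n)) :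
    Continuous (fun x₀ : EuclideanSpace ℝ (Fin n) => gaussPdf (a • x₀) v y) := by
  unfold gaussPdf
  fun_prop

lemma gauss_hasFDerivAt {n : ℕ} (m : EuclideanSpace ℝ (Fin n)) {v : ℝ} (hv : 0 < v)
    (y : EuclideanSpace ℝ (Fin n)) :
    HasFDerivAt (gaussPdf m v)
      ((-(v⁻¹ * gaussPdf m v y)) • innerSL ℝ (y - m)) y := by
  have h1 : HasFDerivAt (fun z : EuclideanSpace ℝ (Fin n) => ‖z - m‖ ^ 2)
      ((2 : ℕ) • innerSL ℝ (y - m)) y := by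
    simpa using ((hasFDerivAt_id y).sub_const m).norm_sq
  have h2 := (h1.const_mul (-(2 * v)⁻¹)).exp
  have h3 := h2.const_mul ((2 * π * v) ^ (-(n : ℝ) / 2))
  have hveq : ∀ z : EuclideanSpace ℝ (Fin n),
      (2 * π * v) ^ (-(n : ℝ) / 2) * Real.exp (-(2 * v)⁻¹ * ‖z - m‖ ^ 2) = gaussPdf m v z := by
    intro z
    rw [gaussPdf]
    ring_nf
  have h4 : HasFDerivAt (gaussPdf m v)
      ((2 * π * v) ^ (-(n : ℝ) / 2) •
        Real.exp (-(2 * v)⁻¹ * ‖y - m‖ ^ 2) • (-(2 * v)⁻¹) • (2 : ℕ) • innerSL ℝ (y - m)) y := by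
    apply h3.congr_of_eventuallyEq
    filter_upwards with z using (hveq z).symm
  convert h4 using 1
  ext w
  have := hveq y
  simp only [ContinuousLinearMap.coe_smul', Pi.smul_apply, smul_eq_mul, nsmul_eq_mul] at *
  rw [← this]
  have hv' : v ≠ 0 := ne_of_gt hv
  field_simp
  simp only [Pi.mul_apply, Pi.ofNat_apply, Pi.natCast_apply]
  ring

set_option maxHeartbeats 1000000 in
set_option synthInstance.maxHeartbeats 400000 in
/-- **Tweedie's formula for the variance-preserving diffusion.**
Let `X₀` have density `pX` with finite first moment, and let
`X_t = √ᾱ·X₀ + √(1−ᾱ)·ε` with `ε ~ N(0, I)` independent of `X₀`, so that the marginal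
density of `X_t` is `pt x = ∫ gaussPdf (√ᾱ·x₀) (1−ᾱ) x · pX x₀ dx₀`.  Then for every `x`
with `pt x > 0`, the conditional mean satisfies
`E[X₀ | X_t = x] = (x + (1−ᾱ)·∇ log pt (x)) / √ᾱ`. -/
theorem tweedie_formula {n : ℕ} (pX : EuclideanSpace ℝ (Fin n) → ℝ)
    (hnn : ∀ x, 0 ≤ pX x) (hint : ∫ x, pX x = 1)
    (hmom : Integrable (fun x => ‖x‖ * pX x))
    (ᾱ : ℝ) (hᾱ : ᾱ ∈ Set.Ioo (0 : ℝ) 1)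
    (pt : EuclideanSpace ℝ (Fin n) → ℝ)
    (hpt : ∀ x, pt x = ∫ x₀, gaussPdf (Real.sqrt ᾱ • x₀) (1 - ᾱ) x * pX x₀)
    (x : EuclideanSpace ℝ (Fin n)) (hx : 0 < pt x) :
    (pt x)⁻¹ • (∫ x₀, (gaussPdf (Real.sqrt ᾱ • x₀) (1 - ᾱ) x * pX x₀) • x₀) =
      (Real.sqrt ᾱ)⁻¹ •
        (x + (1 - ᾱ) • gradient (fun y => Real.log (pt y)) x) := by
  obtain ⟨hα0, hα1⟩ := hᾱ
  set a : ℝ := Real.sqrt ᾱ with ha_def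
  set v : ℝ := 1 - ᾱ with hv_def
  have hv : 0 < v := by simp [hv_def]; linarith
  have ha : 0 < a := Real.sqrt_pos.mpr hα0
  have ha1 : a ≤ 1 := by
    rw [ha_def, show (1:ℝ) = Real.sqrt 1 by simp]
    exact Real.sqrt_le_sqrt (le_of_lt hα1)
  set C : ℝ := (2 * π * v) ^ (-(n : ℝ) / 2) with hC_def
  have hC : 0 < C := Real.rpow_pos_of_pos (by positivity) _
  -- integrability of pX
  have hpX_int : Integrable pX := by
    by_contra h
    rw [integral_undef h] at hint
    exact one_ne_zero hint.symm
  have hpX_meas : AEStronglyMeasurable pX volume := hpX_int.1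
  -- integrability of the basic integrands
  have I0 : ∀ y, Integrable (fun x₀ => gaussPdf (a • x₀) v y * pX x₀) := by
    intro y
    apply Integrable.mono' (hpX_int.const_mul C)
      (((gauss_continuous a y).aestronglyMeasurable).mul hpX_meas)
    filter_upwards with x₀
    simp only [Pi.mul_apply, id_eq]
    rw [Real.norm_eq_abs, abs_of_nonneg (mul_nonneg (gauss_nonneg _ hv _) (hnn _))]
    exact mul_le_mul_of_nonneg_right (gauss_le _ hv _) (hnn _)
  have I1 : ∀ y, Integrable (fun x₀ => (gaussPdf (a • x₀) v y * pX x₀) • x₀) := by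
    intro y
    apply Integrable.mono' (hmom.const_mul C)
      ((((gauss_continuous a y).aestronglyMeasurable).mul hpX_meas).smul
        aestronglyMeasurable_id)
    filter_upwards with x₀
    simp only [Pi.smul_apply', Pi.mul_apply, id_eq]
    rw [norm_smul, Real.norm_eq_abs, abs_of_nonneg (mul_nonneg (gauss_nonneg _ hv _) (hnn _))]
    calc gaussPdf (a • x₀) v y * pX x₀ * ‖x₀‖
        ≤ C * pX x₀ * ‖x₀‖ := by
          apply mul_le_mul_of_nonneg_right _ (norm_nonneg _)
          exact mul_le_mul_of_nonneg_right (gauss_le _ hv _) (hnn _)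
      _ = C * (‖x₀‖ * pX x₀) := by ring
  -- the derivative of the integrand, as a continuous linear map
  set F' : EuclideanSpace ℝ (Fin n) → EuclideanSpace ℝ (Fin n) →
      (EuclideanSpace ℝ (Fin n) →L[ℝ] ℝ) :=
    fun y x₀ => innerSL ℝ (pX x₀ • (-(v⁻¹ * gaussPdf (a • x₀) v y)) • (y - a • x₀))
    with hF'_def
  -- the dominating bound
  have hbound_int : Integrable
      (fun x₀ : EuclideanSpace ℝ (Fin n) => v⁻¹ * C * ((1 + ‖x‖) * pX x₀ + ‖x₀‖ * pX x₀)) :=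
    ((hpX_int.const_mul (1 + ‖x‖)).add hmom).const_mul (v⁻¹ * C)
  have hkey : ∀ (y x₀ : EuclideanSpace ℝ (Fin n)), y ∈ Metric.ball x 1 →
      ‖pX x₀ • (-(v⁻¹ * gaussPdf (a • x₀) v y)) • (y - a • x₀)‖
        ≤ v⁻¹ * C * ((1 + ‖x‖) * pX x₀ + ‖x₀‖ * pX x₀) := by
    intro y x₀ hy
    have hb : ‖y - a • x₀‖ ≤ 1 + ‖x‖ + ‖x₀‖ := by
      have h1 : ‖y - a • x₀‖ ≤ ‖y‖ + ‖a • x₀‖ := norm_sub_le _ _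
      have h2 : ‖y‖ ≤ ‖y - x‖ + ‖x‖ := by
        calc ‖y‖ = ‖y - x + x‖ := by rw [sub_add_cancel]
          _ ≤ ‖y - x‖ + ‖x‖ := norm_add_le _ _
      have h3 : ‖y - x‖ < 1 := by rwa [mem_ball_iff_norm] at hy
      have h4 : ‖a • x₀‖ ≤ ‖x₀‖ := by
        rw [norm_smul, Real.norm_eq_abs, abs_of_pos ha]
        calc a * ‖x₀‖ ≤ 1 * ‖x₀‖ := mul_le_mul_of_nonneg_right ha1 (norm_nonneg _)
          _ = ‖x₀‖ := one_mul _
      linarith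
    rw [norm_smul, norm_smul, Real.norm_eq_abs, Real.norm_eq_abs,
      abs_of_nonneg (hnn _), abs_neg,
      abs_of_nonneg (mul_nonneg (le_of_lt (inv_pos.mpr hv)) (gauss_nonneg _ hv _))]
    calc pX x₀ * ((v⁻¹ * gaussPdf (a • x₀) v y) * ‖y - a • x₀‖)
        ≤ pX x₀ * ((v⁻¹ * C) * (1 + ‖x‖ + ‖x₀‖)) := by
          apply mul_le_mul_of_nonneg_left _ (hnn _)
          apply mul_le_mul
          · exact mul_le_mul_of_nonneg_left (gauss_le _ hv _) (le_of_lt (inv_pos.mpr hv))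
          · exact hb
          · exact norm_nonneg _
          · positivity
      _ = v⁻¹ * C * ((1 + ‖x‖) * pX x₀ + ‖x₀‖ * pX x₀) := by ring
  have hnormle : ∀ (y x₀ : EuclideanSpace ℝ (Fin n)), y ∈ Metric.ball x 1 →
      ‖F' y x₀‖ ≤ v⁻¹ * C * ((1 + ‖x‖) * pX x₀ + ‖x₀‖ * pX x₀) := by
    intro y x₀ hy
    simp only [hF'_def]
    rw [innerSL_apply_norm]
    exact hkey y x₀ hy
  have hveccont : ∀ y : EuclideanSpace ℝ (Fin n), Continuous
      (fun x₀ : EuclideanSpace ℝ (Fin n) =>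
        (-(v⁻¹ * gaussPdf (a • x₀) v y)) • (y - a • x₀)) := by
    intro y
    exact Continuous.smul ((continuous_const.mul (gauss_continuous a y)).neg)
      (continuous_const.sub (continuous_id.const_smul a))
  have hF'_meas : AEStronglyMeasurable (fun x₀ => F' x x₀) volume := by
    apply Continuous.comp_aestronglyMeasurable (ContinuousLinearMap.continuous (innerSL ℝ))
    exact hpX_meas.smul (hveccont x).aestronglyMeasurable
  have h_diff : ∀ᵐ x₀ ∂(volume : Measure (EuclideanSpace ℝ (Fin n))),
      ∀ y ∈ Metric.ball x 1,
        HasFDerivAt (fun y => gaussPdf (a • x₀) v y * pX x₀) (F' y x₀) y := by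
    filter_upwards with x₀ y _
    have h := (gauss_hasFDerivAt (a • x₀) hv y).mul_const (pX x₀)
    refine h.congr_fderiv ?_
    symm
    apply ContinuousLinearMap.ext
    intro w
    simp only [hF'_def, innerSL_apply_apply, ContinuousLinearMap.coe_smul', Pi.smul_apply,
      smul_eq_mul]
    rw [real_inner_smul_left, real_inner_smul_left]
  have hDUIS : HasFDerivAt (fun y => ∫ x₀, gaussPdf (a • x₀) v y * pX x₀)
      (∫ x₀, F' x x₀) x := by
    apply hasFDerivAt_integral_of_dominated_of_fderiv_le (Metric.ball_mem_nhds x one_pos)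
      (Filter.Eventually.of_forall fun y =>
        ((gauss_continuous a y).aestronglyMeasurable).mul hpX_meas)
      (I0 x) hF'_meas
      (Filter.Eventually.of_forall fun x₀ y hy => hnormle y x₀ hy)
      hbound_int h_diff
  have hptDeriv : HasFDerivAt pt (∫ x₀, F' x x₀) x := by
    apply hDUIS.congr_of_eventuallyEq
    filter_upwards with y using hpt y
  -- the candidate gradient
  set G : EuclideanSpace ℝ (Fin n) :=
    ∫ x₀, pX x₀ • ((-(v⁻¹ * gaussPdf (a • x₀) v x)) • (x - a • x₀)) with hG_def
  have hIG : Integrable (fun x₀ : EuclideanSpace ℝ (Fin n) =>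
      pX x₀ • ((-(v⁻¹ * gaussPdf (a • x₀) v x)) • (x - a • x₀))) := by
    apply Integrable.mono' hbound_int (hpX_meas.smul (hveccont x).aestronglyMeasurable)
    filter_upwards with x₀ using hkey x x₀ (Metric.mem_ball_self one_pos)
  have hF'int : Integrable (fun x₀ => F' x x₀) := by
    apply Integrable.mono' hbound_int hF'_meas
    filter_upwards with x₀ using hnormle x x₀ (Metric.mem_ball_self one_pos)
  have htoDual : (InnerProductSpace.toDual ℝ (EuclideanSpace ℝ (Fin n))) G
      = ∫ x₀, F' x x₀ := by
    apply ContinuousLinearMap.ext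
    intro w
    rw [ContinuousLinearMap.integral_apply hF'int]
    rw [InnerProductSpace.toDual_apply_apply, hG_def, real_inner_comm, ← integral_inner hIG]
    congr 1
    funext x₀
    simp only [hF'_def, innerSL_apply_apply]
    exact real_inner_comm _ _
  have hgrad : HasGradientAt pt G x := by
    rw [hasGradientAt_iff_hasFDerivAt, htoDual]
    exact hptDeriv
  -- gradient of the log
  have hlog : HasGradientAt (fun y => Real.log (pt y)) ((pt x)⁻¹ • G) x := by
    rw [hasGradientAt_iff_hasFDerivAt]
    have h1 : HasFDerivAt (fun y => Real.log (pt y))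
        ((pt x)⁻¹ • (InnerProductSpace.toDual ℝ (EuclideanSpace ℝ (Fin n)) G)) x :=
      (Real.hasDerivAt_log (ne_of_gt hx)).comp_hasFDerivAt x
        (hasGradientAt_iff_hasFDerivAt.mp hgrad)
    convert h1 using 1
    simp
    · rfl
    · rfl
    rw [map_smulₛₗ]
    rfl
  have hgradeq : gradient (fun y => Real.log (pt y)) x = (pt x)⁻¹ • G := hlog.gradient
  -- decompose G
  have hGdecomp : G = v⁻¹ • (a • (∫ x₀, (gaussPdf (a • x₀) v x * pX x₀) • x₀) - (pt x) • x) := by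
    have h1 : (fun x₀ : EuclideanSpace ℝ (Fin n) =>
        pX x₀ • ((-(v⁻¹ * gaussPdf (a • x₀) v x)) • (x - a • x₀)))
        = fun x₀ => v⁻¹ • (a • ((gaussPdf (a • x₀) v x * pX x₀) • x₀)
            - (gaussPdf (a • x₀) v x * pX x₀) • x) := by
      funext x₀
      match_scalars <;> ring
    have hi1 : Integrable (fun x₀ : EuclideanSpace ℝ (Fin n) =>
        a • ((gaussPdf (a • x₀) v x * pX x₀) • x₀)) := (I1 x).smul a
    rw [hG_def, h1]
    rw [integral_smul, integral_sub hi1 ((I0 x).smul_const x),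
      integral_smul, integral_smul_const, ← hpt x]
  rw [hgradeq, hGdecomp]
  have hptne : pt x ≠ 0 := ne_of_gt hx
  have hane : a ≠ 0 := ne_of_gt ha
  have hvne : v ≠ 0 := ne_of_gt hv
  match_scalars <;> field_simp <;> ring
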